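/- For a finite-dimensional weak Hopf algebra H with dual pair of non-degenerate left integrals ℓ, λ, the element (ℓ₂⇀λ)⊗S⁻¹(ℓ₁) ∈ H*⊗H is a dual bases tensor: for every linear map T: H → H, Tr(T) = ⟨λ, T(S⁻¹(ℓ₁))ℓ₂⟩. -/

import Mathlib

open TensorProduct

/-- A weak Hopf algebra over a field `k` (Böhm–Nill–Szlachányi):
an algebra and coalgebra with multiplicative comultiplication, the weak
unit/counit axioms, and an antipode. -/
structure WeakHopf (k H : Type*) [Field k] [Ring H] [Algebra k H] where
  comul : H →ₗ[k] H ⊗[k] H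
  counit : H →ₗ[k] k
  antipode : H →ₗ[k] H
  coassoc : ∀ h : H,
    (TensorProduct.assoc k H H H) ((TensorProduct.map comul LinearMap.id) (comul h)) =
      (TensorProduct.map LinearMap.id comul) (comul h)
  counit_comul : ∀ h : H,
    (TensorProduct.lid k H) ((TensorProduct.map counit LinearMap.id) (comul h)) = h
  comul_counit : ∀ h : H,
    (TensorProduct.rid k H) ((TensorProduct.map LinearMap.id counit) (comul h)) = h
  comul_mul : ∀ a b : H, comul (a * b) = comul a * comul b
  -- (Δ⊗id)Δ(1) = (Δ(1)⊗1)(1⊗Δ(1)) = (1⊗Δ(1))(Δ(1)⊗1)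
  weak_unit_left :
    (TensorProduct.map comul LinearMap.id) (comul 1) =
      (comul 1 ⊗ₜ[k] (1 : H)) *
        ((TensorProduct.assoc k H H H).symm ((1 : H) ⊗ₜ[k] comul 1))
  weak_unit_right :
    (TensorProduct.map comul LinearMap.id) (comul 1) =
      ((TensorProduct.assoc k H H H).symm ((1 : H) ⊗ₜ[k] comul 1)) *
        (comul 1 ⊗ₜ[k] (1 : H))
  -- ε(fgh) = ε(fg₁)ε(g₂h) = ε(fg₂)ε(g₁h)
  weak_counit_left : ∀ f g h : H,
    counit (f * g * h) =
      (TensorProduct.lid k k)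
        ((TensorProduct.map (counit ∘ₗ LinearMap.mulLeft k f)
          (counit ∘ₗ LinearMap.mulRight k h)) (comul g))
  weak_counit_right : ∀ f g h : H,
    counit (f * g * h) =
      (TensorProduct.lid k k)
        ((TensorProduct.map (counit ∘ₗ LinearMap.mulLeft k f)
          (counit ∘ₗ LinearMap.mulRight k h)) ((TensorProduct.comm k H H) (comul g)))
  -- h₁S(h₂) = ε(1₁h)1₂  (target counital map)
  antipode_right : ∀ h : H,
    (LinearMap.mul' k H) ((TensorProduct.map LinearMap.id antipode) (comul h)) =
      (TensorProduct.lid k H)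
        ((TensorProduct.map (counit ∘ₗ LinearMap.mulRight k h) LinearMap.id) (comul 1))
  -- S(h₁)h₂ = 1₁ε(h1₂)  (source counital map)
  antipode_left : ∀ h : H,
    (LinearMap.mul' k H) ((TensorProduct.map antipode LinearMap.id) (comul h)) =
      (TensorProduct.rid k H)
        ((TensorProduct.map LinearMap.id (counit ∘ₗ LinearMap.mulLeft k h)) (comul 1))
  -- S(h₁)h₂S(h₃) = S(h)
  antipode_mid : ∀ h : H,
    (LinearMap.mul' k H)
      ((TensorProduct.map (LinearMap.mul' k H ∘ₗ TensorProduct.map antipode LinearMap.id)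
        antipode) ((TensorProduct.map comul LinearMap.id) (comul h))) = antipode h

namespace WeakHopf

variable {k H : Type*} [Field k] [Ring H] [Algebra k H] (W : WeakHopf k H)

/-- The target counital map ε_t(h) = ε(1₁h)1₂, as a linear map. -/
noncomputable def εtL : H →ₗ[k] H :=
  (TensorProduct.lid k H).toLinearMap
    ∘ₗ TensorProduct.map
        (W.counit ∘ₗ LinearMap.mul' k H ∘ₗ (TensorProduct.comm k H H).toLinearMap)
        LinearMap.id
    ∘ₗ (TensorProduct.assoc k H H H).symm.toLinearMap
    ∘ₗ (TensorProduct.mk k H (H ⊗[k] H)).flip (W.comul 1)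

/-- The source counital map ε_s(h) = 1₁ε(h1₂), as a linear map. -/
noncomputable def εsL : H →ₗ[k] H :=
  (TensorProduct.rid k H).toLinearMap
    ∘ₗ TensorProduct.map LinearMap.id
        (W.counit ∘ₗ LinearMap.mul' k H ∘ₗ (TensorProduct.comm k H H).toLinearMap)
    ∘ₗ (TensorProduct.assoc k H H H).toLinearMap
    ∘ₗ (TensorProduct.mk k (H ⊗[k] H) H) (W.comul 1)

/-- The minimal weak Hopf subalgebra H_min = H_t H_s (as a subspace). -/
noncomputable def Hmin : Submodule k H :=
  Submodule.span k
    {x : H | ∃ z ∈ Set.range ⇑W.εtL, ∃ y ∈ Set.range ⇑W.εsL, x = z * y}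

/-- g ∈ H is group-like: invertible and Δ(g) = (g⊗g)Δ(1) = Δ(1)(g⊗g). -/
def IsGroupLike (g : H) : Prop :=
  IsUnit g ∧ W.comul g = (g ⊗ₜ[k] g) * W.comul 1 ∧
    W.comul g = W.comul 1 * (g ⊗ₜ[k] g)

/-- The convolution product on H* = (H →ₗ[k] k): ⟨φψ, h⟩ = ⟨φ, h₁⟩⟨ψ, h₂⟩. -/
noncomputable def dualMul (φ ψ : H →ₗ[k] k) : H →ₗ[k] k :=
  (TensorProduct.lid k k).toLinearMap ∘ₗ TensorProduct.map φ ψ ∘ₗ W.comul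

/-- γ ∈ H* is group-like: invertible in H* and
⟨γ,hg⟩ = ⟨γ,h1₁⟩⟨γ,S(1₂)g⟩ = ⟨γ,hS(1₁)⟩⟨γ,1₂g⟩ for all h,g. -/
noncomputable def IsGroupLikeDual (γ : H →ₗ[k] k) : Prop :=
  (∃ β : H →ₗ[k] k, W.dualMul γ β = W.counit ∧ W.dualMul β γ = W.counit) ∧
  (∀ h g : H, γ (h * g) =
    (TensorProduct.lid k k)
      ((TensorProduct.map (γ ∘ₗ LinearMap.mulLeft k h)
        (γ ∘ₗ LinearMap.mulRight k g ∘ₗ W.antipode)) (W.comul 1))) ∧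
  (∀ h g : H, γ (h * g) =
    (TensorProduct.lid k k)
      ((TensorProduct.map (γ ∘ₗ LinearMap.mulLeft k h ∘ₗ W.antipode)
        (γ ∘ₗ LinearMap.mulRight k g)) (W.comul 1)))

/-- x is a left integral in H: hx = ε_t(h)x for all h. -/
def IsLeftIntegral (x : H) : Prop := ∀ h : H, h * x = W.εtL h * x

/-- The space of left integrals in H. -/
noncomputable def leftIntegrals : Submodule k H where
  carrier := {x : H | ∀ h : H, h * x = W.εtL h * x}
  add_mem' := fun ha hb h => by rw [mul_add, ha h, hb h, mul_add]
  zero_mem' := fun h => by rw [mul_zero, mul_zero]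
  smul_mem' := fun c x hx h => by rw [mul_smul_comm, hx h, mul_smul_comm]

/-- λ ∈ H* is a left integral in H*: equivalently h₁λ(h₂) = ε_s(h₁)λ(h₂). -/
noncomputable def IsLeftIntegralDual (lam : H →ₗ[k] k) : Prop :=
  ∀ h : H,
    (TensorProduct.rid k H) ((TensorProduct.map LinearMap.id lam) (W.comul h)) =
      (TensorProduct.rid k H) ((TensorProduct.map W.εsL lam) (W.comul h))

/-- The action y·h := ⟨γ, yh1₁⟩S(1₂) of H on H_s associated to γ ∈ H*. -/
noncomputable def act (γ : H →ₗ[k] k) (y h : H) : H :=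
  (TensorProduct.lid k H)
    ((TensorProduct.map (γ ∘ₗ LinearMap.mulLeft k (y * h)) W.antipode) (W.comul 1))

/-- ε_t^g(ψ) ∈ H*, given by ⟨ε_t^g(ψ), x⟩ = ε(S(x)g₁)ψ(g₂). -/
noncomputable def etg (g : H) (ψ : H →ₗ[k] k) : H →ₗ[k] k :=
  (TensorProduct.lid k k).toLinearMap
    ∘ₗ TensorProduct.map (W.counit ∘ₗ LinearMap.mul' k H) ψ
    ∘ₗ (TensorProduct.assoc k H H H).symm.toLinearMap
    ∘ₗ (TensorProduct.mk k H (H ⊗[k] H)).flip (W.comul g)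
    ∘ₗ W.antipode

/-- L_g = {φ ∈ H* : ψφ = ε_t^g(ψ)φ for all ψ}. -/
noncomputable def Lset (g : H) : Set (H →ₗ[k] k) :=
  {φ | ∀ ψ : H →ₗ[k] k, W.dualMul ψ φ = W.dualMul (W.etg g ψ) φ}

end WeakHopf
namespace WeakHopfTrace

open TensorProduct LinearMap

variable {k H : Type*} [Field k] [Ring H] [Algebra k H]

/-! ### generic tensor helpers -/

section Generic

variable {A B C A' B' : Type*}
  [AddCommMonoid A] [AddCommMonoid B] [AddCommMonoid C] [AddCommMonoid A'] [AddCommMonoid B']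
  [Module k A] [Module k B] [Module k C] [Module k A'] [Module k B']

lemma map_split (f : A →ₗ[k] A') (g : B →ₗ[k] B') :
    TensorProduct.map f g = TensorProduct.map f LinearMap.id ∘ₗ TensorProduct.map LinearMap.id g := by
  rw [← TensorProduct.map_comp, LinearMap.comp_id, LinearMap.id_comp]

lemma map_split' (f : A →ₗ[k] A') (g : B →ₗ[k] B') :
    TensorProduct.map f g = TensorProduct.map LinearMap.id g ∘ₗ TensorProduct.map f LinearMap.id := by
  rw [← TensorProduct.map_comp, LinearMap.comp_id, LinearMap.id_comp]

lemma map_id_comp (g₁ : B →ₗ[k] B') (g₂ : B' →ₗ[k] C) :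
    (TensorProduct.map LinearMap.id (g₂ ∘ₗ g₁) : A ⊗[k] B →ₗ[k] A ⊗[k] C) =
      TensorProduct.map LinearMap.id g₂ ∘ₗ TensorProduct.map LinearMap.id g₁ := by
  rw [← TensorProduct.map_comp, LinearMap.id_comp]

lemma map_comp_id (g₁ : B →ₗ[k] B') (g₂ : B' →ₗ[k] C) :
    (TensorProduct.map (g₂ ∘ₗ g₁) LinearMap.id : B ⊗[k] A →ₗ[k] C ⊗[k] A) =
      TensorProduct.map g₂ LinearMap.id ∘ₗ TensorProduct.map g₁ LinearMap.id := by
  rw [← TensorProduct.map_comp, LinearMap.id_comp]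

end Generic

section GenericAlg

variable {A B : Type*} [Ring A] [Ring B] [Algebra k A] [Algebra k B]

lemma mul_one_tmul (d : B) (u : A ⊗[k] B) :
    u * ((1 : A) ⊗ₜ[k] d) = (TensorProduct.map LinearMap.id (LinearMap.mulRight k d)) u := by
  induction u using TensorProduct.induction_on with
  | zero => simp
  | tmul a b => simp [Algebra.TensorProduct.tmul_mul_tmul]
  | add u v hu hv => rw [add_mul, hu, hv, map_add]

lemma one_tmul_mul (d : B) (u : A ⊗[k] B) :
    ((1 : A) ⊗ₜ[k] d) * u = (TensorProduct.map LinearMap.id (LinearMap.mulLeft k d)) u := by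
  induction u using TensorProduct.induction_on with
  | zero => simp
  | tmul a b => simp [Algebra.TensorProduct.tmul_mul_tmul]
  | add u v hu hv => rw [mul_add, hu, hv, map_add]

end GenericAlg

/-! ### associator as an algebra map -/

lemma assoc_coe (w : (H ⊗[k] H) ⊗[k] H) :
    (TensorProduct.assoc k H H H) w = (Algebra.TensorProduct.assoc k k k H H H) w := by
  induction w using TensorProduct.induction_on with
  | zero => rw [LinearEquiv.map_zero, map_zero]
  | tmul a c =>
    induction a using TensorProduct.induction_on with
    | zero => rw [zero_tmul, LinearEquiv.map_zero, map_zero]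
    | tmul a b => simp [Algebra.TensorProduct.assoc_tmul]
    | add u v hu hv =>
        rw [add_tmul, LinearEquiv.map_add, map_add, hu, hv]
  | add u v hu hv => rw [LinearEquiv.map_add, map_add, hu, hv]

lemma assoc_mul (u v : (H ⊗[k] H) ⊗[k] H) :
    (TensorProduct.assoc k H H H) (u * v) =
      (TensorProduct.assoc k H H H) u * (TensorProduct.assoc k H H H) v := by
  simp only [assoc_coe, map_mul]

lemma assoc_symm_mul (u v : H ⊗[k] (H ⊗[k] H)) :
    (TensorProduct.assoc k H H H).symm (u * v) =
      (TensorProduct.assoc k H H H).symm u * (TensorProduct.assoc k H H H).symm v := by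
  apply (TensorProduct.assoc k H H H).injective
  rw [assoc_mul]
  simp only [LinearEquiv.apply_symm_apply]

end WeakHopfTrace

namespace WeakHopfTrace2

open TensorProduct LinearMap WeakHopfTrace

variable {k H : Type*} [Field k] [Ring H] [Algebra k H] (W : WeakHopf k H)

lemma e_mul (x : H) : W.comul 1 * W.comul x = W.comul x := by
  rw [← W.comul_mul, one_mul]

lemma mul_e (x : H) : W.comul x * W.comul 1 = W.comul x := by
  rw [← W.comul_mul, mul_one]

/-- ε_t(x) = ε(1₁ x) 1₂, in map form. -/
lemma epsT_apply (x : H) :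
    W.εtL x = (TensorProduct.lid k H)
      ((TensorProduct.map (W.counit ∘ₗ LinearMap.mulRight k x) LinearMap.id) (W.comul 1)) := by
  have key : ∀ u : H ⊗[k] H,
      (TensorProduct.lid k H)
        ((TensorProduct.map (W.counit ∘ₗ LinearMap.mul' k H ∘ₗ (TensorProduct.comm k H H).toLinearMap)
          LinearMap.id) ((TensorProduct.assoc k H H H).symm (x ⊗ₜ[k] u))) =
      (TensorProduct.lid k H)
        ((TensorProduct.map (W.counit ∘ₗ LinearMap.mulRight k x) LinearMap.id) u) := by
    intro u
    induction u using TensorProduct.induction_on with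
    | zero => simp only [tmul_zero, LinearEquiv.map_zero, LinearMap.map_zero]
    | tmul p q =>
        simp [TensorProduct.assoc_symm_tmul, LinearMap.mul'_apply]
    | add u v hu hv =>
        simp only [tmul_add, LinearEquiv.map_add, LinearMap.map_add, hu, hv]
  simpa [WeakHopf.εtL, LinearMap.comp_apply] using key (W.comul 1)

/-- ε_s(x) = 1₁ ε(x 1₂), in map form. -/
lemma epsS_apply (x : H) :
    W.εsL x = (TensorProduct.rid k H)
      ((TensorProduct.map LinearMap.id (W.counit ∘ₗ LinearMap.mulLeft k x)) (W.comul 1)) := by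
  have key : ∀ u : H ⊗[k] H,
      (TensorProduct.rid k H)
        ((TensorProduct.map LinearMap.id
          (W.counit ∘ₗ LinearMap.mul' k H ∘ₗ (TensorProduct.comm k H H).toLinearMap))
          ((TensorProduct.assoc k H H H) (u ⊗ₜ[k] x))) =
      (TensorProduct.rid k H)
        ((TensorProduct.map LinearMap.id (W.counit ∘ₗ LinearMap.mulLeft k x)) u) := by
    intro u
    induction u using TensorProduct.induction_on with
    | zero => simp only [zero_tmul, LinearEquiv.map_zero, LinearMap.map_zero]
    | tmul p q =>
        simp [TensorProduct.assoc_tmul, LinearMap.mul'_apply]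
    | add u v hu hv =>
        simp only [add_tmul, LinearEquiv.map_add, LinearMap.map_add, hu, hv]
  simpa [WeakHopf.εsL, LinearMap.comp_apply] using key (W.comul 1)

lemma epsT_eq (x : H) :
    W.εtL x = (LinearMap.mul' k H)
      ((TensorProduct.map LinearMap.id W.antipode) (W.comul x)) := by
  rw [epsT_apply]; exact (W.antipode_right x).symm

lemma epsS_eq (x : H) :
    W.εsL x = (LinearMap.mul' k H)
      ((TensorProduct.map W.antipode LinearMap.id) (W.comul x)) := by
  rw [epsS_apply]; exact (W.antipode_left x).symm

end WeakHopfTrace2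

namespace WeakHopfTrace2

open TensorProduct LinearMap WeakHopfTrace

variable {k H : Type*} [Field k] [Ring H] [Algebra k H] (W : WeakHopf k H)

/-- generalized source counital map, with `v` in place of `Δ(1)`. -/
noncomputable def epsSgen (v : H ⊗[k] H) : H →ₗ[k] H where
  toFun z := (TensorProduct.rid k H)
    ((TensorProduct.map LinearMap.id (W.counit ∘ₗ LinearMap.mulLeft k z)) v)
  map_add' z z' := by
    have h : (TensorProduct.map LinearMap.id (W.counit ∘ₗ LinearMap.mulLeft k (z + z')) :
        H ⊗[k] H →ₗ[k] H ⊗[k] k)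
        = TensorProduct.map LinearMap.id (W.counit ∘ₗ LinearMap.mulLeft k z)
          + TensorProduct.map LinearMap.id (W.counit ∘ₗ LinearMap.mulLeft k z') := by
      rw [← TensorProduct.map_add_right]
      congr 1
      ext a
      simp [add_mul]
    rw [h]
    simp
  map_smul' c z := by
    have h : (TensorProduct.map LinearMap.id (W.counit ∘ₗ LinearMap.mulLeft k (c • z)) :
        H ⊗[k] H →ₗ[k] H ⊗[k] k)
        = c • TensorProduct.map LinearMap.id (W.counit ∘ₗ LinearMap.mulLeft k z) := by
      apply TensorProduct.ext'
      intro a b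
      simp only [TensorProduct.map_tmul, LinearMap.comp_apply, LinearMap.mulLeft_apply,
        LinearMap.id_coe, id_eq, LinearMap.smul_apply, smul_mul_assoc, LinearMap.map_smul,
        smul_eq_mul]
      rw [← smul_eq_mul, tmul_smul]
    rw [h]
    simp

lemma epsSgen_zero : epsSgen W (0 : H ⊗[k] H) = 0 := by
  ext z; simp [epsSgen]

lemma epsSgen_add (v v' : H ⊗[k] H) :
    epsSgen W (v + v') = epsSgen W v + epsSgen W v' := by
  ext z; simp [epsSgen]

lemma epsSgen_tmul (p q z : H) :
    epsSgen W (p ⊗ₜ[k] q) z = W.counit (z * q) • p := by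
  simp [epsSgen]

lemma epsS_eq_gen : W.εsL = epsSgen W (W.comul 1) := by
  ext z
  rw [epsS_apply]
  rfl

end WeakHopfTrace2

namespace WeakHopfTrace2

open TensorProduct LinearMap WeakHopfTrace

variable {k H : Type*} [Field k] [Ring H] [Algebra k H] (W : WeakHopf k H)

lemma I1_aux (D u v : H ⊗[k] H) :
    (TensorProduct.map LinearMap.id
      ((TensorProduct.lid k H).toLinearMap ∘ₗ
        TensorProduct.map W.counit LinearMap.id ∘ₗ LinearMap.mulLeft k D))
      ((TensorProduct.assoc k H H H)
        (((TensorProduct.assoc k H H H).symm ((1 : H) ⊗ₜ[k] u)) * (v ⊗ₜ[k] (1 : H))))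
      = (TensorProduct.map (epsSgen W v) LinearMap.id) (D * u) := by
  induction u using TensorProduct.induction_on with
  | zero =>
      simp only [tmul_zero, LinearEquiv.map_zero, zero_mul, mul_zero, LinearMap.map_zero]
  | add u₁ u₂ h₁ h₂ =>
      simp only [tmul_add, LinearEquiv.map_add, add_mul, mul_add, LinearMap.map_add, h₁, h₂]
  | tmul p' q' =>
    induction v using TensorProduct.induction_on with
    | zero =>
        simp only [zero_tmul, mul_zero, LinearEquiv.map_zero, LinearMap.map_zero,
          epsSgen_zero, TensorProduct.map_zero_left, LinearMap.zero_apply]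
    | add v₁ v₂ h₁ h₂ =>
        simp only [add_tmul, mul_add, LinearEquiv.map_add, LinearMap.map_add, h₁, h₂,
          epsSgen_add, TensorProduct.map_add_left, LinearMap.add_apply]
    | tmul p q =>
      induction D using TensorProduct.induction_on with
      | zero =>
          have h0 : LinearMap.mulLeft k (0 : H ⊗[k] H) = 0 := by ext a; simp
          simp [h0]
      | add D₁ D₂ h₁ h₂ =>
          have hadd : LinearMap.mulLeft k (D₁ + D₂)
              = LinearMap.mulLeft k D₁ + LinearMap.mulLeft k D₂ := by
            ext a; simp [add_mul]
          simp only [hadd, LinearMap.comp_add, LinearMap.add_comp,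
            TensorProduct.map_add_right, LinearMap.add_apply, add_mul, LinearMap.map_add,
            h₁, h₂]
      | tmul d₁ d₂ =>
          simp only [TensorProduct.assoc_symm_tmul, Algebra.TensorProduct.tmul_mul_tmul,
            one_mul, mul_one, TensorProduct.assoc_tmul, TensorProduct.map_tmul,
            LinearMap.comp_apply, LinearMap.mulLeft_apply, LinearMap.id_coe, id_eq,
            LinearEquiv.coe_coe, TensorProduct.lid_tmul, epsSgen_tmul]
          rw [tmul_smul, smul_tmul', mul_assoc]

/-- (1 ⊗ x)Δ(1) = (ε_s ⊗ id)Δ(x). -/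
lemma I1 (x : H) :
    ((1 : H) ⊗ₜ[k] x) * W.comul 1
      = (TensorProduct.map W.εsL LinearMap.id) (W.comul x) := by
  have hβ : LinearMap.mulLeft k x
      = ((TensorProduct.lid k H).toLinearMap ∘ₗ
          TensorProduct.map W.counit LinearMap.id ∘ₗ LinearMap.mulLeft k (W.comul x))
        ∘ₗ W.comul := by
    ext z
    simp only [LinearMap.comp_apply, LinearMap.mulLeft_apply, LinearEquiv.coe_toLinearMap]
    rw [← W.comul_mul]
    exact (W.counit_comul (x * z)).symm
  calc ((1 : H) ⊗ₜ[k] x) * W.comul 1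
      = (TensorProduct.map LinearMap.id (LinearMap.mulLeft k x)) (W.comul 1) :=
        one_tmul_mul _ _
    _ = (TensorProduct.map LinearMap.id ((TensorProduct.lid k H).toLinearMap ∘ₗ
          TensorProduct.map W.counit LinearMap.id ∘ₗ LinearMap.mulLeft k (W.comul x)))
          ((TensorProduct.map LinearMap.id W.comul) (W.comul 1)) := by
        rw [hβ, map_id_comp]; rfl
    _ = (TensorProduct.map LinearMap.id ((TensorProduct.lid k H).toLinearMap ∘ₗ
          TensorProduct.map W.counit LinearMap.id ∘ₗ LinearMap.mulLeft k (W.comul x)))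
          ((TensorProduct.assoc k H H H)
            (((TensorProduct.assoc k H H H).symm ((1:H) ⊗ₜ[k] W.comul 1)) *
              (W.comul 1 ⊗ₜ[k] (1:H)))) := by
        rw [← W.weak_unit_right, W.coassoc]
    _ = (TensorProduct.map (epsSgen W (W.comul 1)) LinearMap.id) (W.comul x * W.comul 1) :=
        I1_aux W _ _ _
    _ = (TensorProduct.map W.εsL LinearMap.id) (W.comul x) := by
        rw [← epsS_eq_gen, mul_e]

end WeakHopfTrace2

namespace WeakHopfTrace2

open TensorProduct LinearMap WeakHopfTrace

variable {k H : Type*} [Field k] [Ring H] [Algebra k H] (W : WeakHopf k H)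

lemma comul_lid (c : H →ₗ[k] k) (u : H ⊗[k] H) :
    W.comul ((TensorProduct.lid k H) ((TensorProduct.map c LinearMap.id) u))
      = (TensorProduct.lid k (H ⊗[k] H)) ((TensorProduct.map c W.comul) u) := by
  induction u using TensorProduct.induction_on with
  | zero => simp only [LinearMap.map_zero, LinearEquiv.map_zero]
  | tmul p q => simp
  | add u v hu hv => simp only [LinearMap.map_add, LinearEquiv.map_add, hu, hv]

lemma Dt_aux (c : H →ₗ[k] k) (u v : H ⊗[k] H) :
    (TensorProduct.lid k (H ⊗[k] H))
      ((TensorProduct.map c LinearMap.id)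
        ((TensorProduct.assoc k H H H)
          ((v ⊗ₜ[k] (1:H)) * (TensorProduct.assoc k H H H).symm ((1:H) ⊗ₜ[k] u))))
      = ((TensorProduct.lid k H) ((TensorProduct.map c LinearMap.id) v) ⊗ₜ[k] (1:H)) * u := by
  induction u using TensorProduct.induction_on with
  | zero =>
      simp only [tmul_zero, LinearEquiv.map_zero, mul_zero, LinearMap.map_zero]
  | add u₁ u₂ h₁ h₂ =>
      simp only [tmul_add, LinearEquiv.map_add, mul_add, LinearMap.map_add, h₁, h₂]
  | tmul p' q' =>
    induction v using TensorProduct.induction_on with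
    | zero =>
        simp only [zero_tmul, zero_mul, LinearEquiv.map_zero, LinearMap.map_zero]
    | add v₁ v₂ h₁ h₂ =>
        simp only [add_tmul, add_mul, LinearEquiv.map_add, LinearMap.map_add, h₁, h₂]
    | tmul p q =>
        simp only [TensorProduct.assoc_symm_tmul, Algebra.TensorProduct.tmul_mul_tmul,
          one_mul, mul_one, TensorProduct.assoc_tmul, TensorProduct.map_tmul,
          LinearMap.id_coe, id_eq, TensorProduct.lid_tmul, smul_tmul', smul_mul_assoc]

/-- Δ(ε_t(z)) = (ε_t(z) ⊗ 1) Δ(1). -/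
lemma comul_epsT (z : H) :
    W.comul (W.εtL z) = (W.εtL z ⊗ₜ[k] (1:H)) * W.comul 1 := by
  rw [epsT_apply, comul_lid, map_split (k := k) (W.counit ∘ₗ LinearMap.mulRight k z) W.comul,
    LinearMap.comp_apply, ← W.coassoc, W.weak_unit_left]
  exact Dt_aux _ _ _

lemma epsT_lm : W.εtL
    = LinearMap.mul' k H ∘ₗ TensorProduct.map LinearMap.id W.antipode ∘ₗ W.comul := by
  ext z; exact epsT_eq W z

/-- S(x₁) ε_t(x₂) = S(x). -/
lemma AM (x : H) :
    (LinearMap.mul' k H) ((TensorProduct.map W.antipode W.εtL) (W.comul x))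
      = W.antipode x := by
  have hsplit : (TensorProduct.map W.antipode W.εtL) (W.comul x)
      = (TensorProduct.map W.antipode LinearMap.id)
          ((TensorProduct.map LinearMap.id (LinearMap.mul' k H ∘ₗ
            TensorProduct.map LinearMap.id W.antipode))
            ((TensorProduct.map LinearMap.id W.comul) (W.comul x))) := by
    rw [epsT_lm, map_split (k := k) W.antipode, LinearMap.comp_apply,
      show (LinearMap.mul' k H ∘ₗ TensorProduct.map LinearMap.id W.antipode ∘ₗ W.comul)
        = (LinearMap.mul' k H ∘ₗ TensorProduct.map LinearMap.id W.antipode) ∘ₗ W.comul from rfl,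
      map_id_comp, LinearMap.comp_apply]
  rw [hsplit, ← W.coassoc]
  have key : ∀ w : (H ⊗[k] H) ⊗[k] H,
      (LinearMap.mul' k H) ((TensorProduct.map W.antipode LinearMap.id)
        ((TensorProduct.map LinearMap.id (LinearMap.mul' k H ∘ₗ
          TensorProduct.map LinearMap.id W.antipode))
          ((TensorProduct.assoc k H H H) w)))
      = (LinearMap.mul' k H)
          ((TensorProduct.map (LinearMap.mul' k H ∘ₗ TensorProduct.map W.antipode LinearMap.id)
            W.antipode) w) := by
    intro w
    induction w using TensorProduct.induction_on with
    | zero => simp only [LinearEquiv.map_zero, LinearMap.map_zero]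
    | add w₁ w₂ h₁ h₂ => simp only [LinearEquiv.map_add, LinearMap.map_add, h₁, h₂]
    | tmul a c =>
      induction a using TensorProduct.induction_on with
      | zero => rw [zero_tmul]; simp only [LinearEquiv.map_zero, LinearMap.map_zero]
      | add a₁ a₂ h₁ h₂ =>
          simp only [add_tmul, LinearEquiv.map_add, LinearMap.map_add, h₁, h₂]
      | tmul a b =>
          simp [LinearMap.mul'_apply, mul_assoc]
  rw [key]
  exact W.antipode_mid x

end WeakHopfTrace2

namespace WeakHopfTrace2

open TensorProduct LinearMap WeakHopfTrace

variable {k H : Type*} [Field k] [Ring H] [Algebra k H] (W : WeakHopf k H)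

lemma M1 (w : (H ⊗[k] H) ⊗[k] H) (d : H ⊗[k] H) :
    (TensorProduct.map (LinearMap.mul' k H) LinearMap.id) w * d
      = (TensorProduct.map (LinearMap.mul' k H) LinearMap.id)
          (w * (TensorProduct.assoc k H H H).symm ((1:H) ⊗ₜ[k] d)) := by
  induction d using TensorProduct.induction_on with
  | zero => simp only [tmul_zero, LinearEquiv.map_zero, mul_zero, LinearMap.map_zero]
  | add d₁ d₂ h₁ h₂ =>
      simp only [tmul_add, LinearEquiv.map_add, mul_add, LinearMap.map_add, h₁, h₂]
  | tmul p q =>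
    rw [TensorProduct.assoc_symm_tmul]
    induction w using TensorProduct.induction_on with
    | zero => simp only [zero_mul, LinearMap.map_zero]
    | add w₁ w₂ h₁ h₂ =>
        simp only [add_mul, LinearMap.map_add, h₁, h₂]
    | tmul v c =>
      rw [Algebra.TensorProduct.tmul_mul_tmul, TensorProduct.map_tmul,
        Algebra.TensorProduct.tmul_mul_tmul]
      induction v using TensorProduct.induction_on with
      | zero => simp only [zero_mul, LinearMap.map_zero, zero_tmul]
      | add v₁ v₂ h₁ h₂ =>
          simp only [add_mul, LinearMap.map_add, add_tmul, h₁, h₂]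
      | tmul a b =>
          simp only [Algebra.TensorProduct.tmul_mul_tmul, TensorProduct.map_tmul,
            LinearMap.mul'_apply, LinearMap.id_coe, id_eq, one_mul, mul_assoc]

lemma M2 (w : (H ⊗[k] H) ⊗[k] H) (d : H ⊗[k] H) :
    (TensorProduct.map (TensorProduct.map W.antipode LinearMap.id) LinearMap.id)
        (w * (TensorProduct.assoc k H H H).symm ((1:H) ⊗ₜ[k] d))
      = (TensorProduct.map (TensorProduct.map W.antipode LinearMap.id) LinearMap.id) w
          * (TensorProduct.assoc k H H H).symm ((1:H) ⊗ₜ[k] d) := by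
  induction d using TensorProduct.induction_on with
  | zero => simp only [tmul_zero, LinearEquiv.map_zero, mul_zero, LinearMap.map_zero]
  | add d₁ d₂ h₁ h₂ =>
      simp only [tmul_add, LinearEquiv.map_add, mul_add, LinearMap.map_add, h₁, h₂]
  | tmul p q =>
    rw [TensorProduct.assoc_symm_tmul]
    induction w using TensorProduct.induction_on with
    | zero => simp only [zero_mul, LinearMap.map_zero]
    | add w₁ w₂ h₁ h₂ =>
        simp only [add_mul, LinearMap.map_add, h₁, h₂]
    | tmul v c =>
      rw [Algebra.TensorProduct.tmul_mul_tmul, TensorProduct.map_tmul,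
        TensorProduct.map_tmul, Algebra.TensorProduct.tmul_mul_tmul]
      induction v using TensorProduct.induction_on with
      | zero => simp only [zero_mul, LinearMap.map_zero, zero_tmul]
      | add v₁ v₂ h₁ h₂ =>
          simp only [add_mul, LinearMap.map_add, add_tmul, h₁, h₂]
      | tmul a b =>
          simp only [Algebra.TensorProduct.tmul_mul_tmul, TensorProduct.map_tmul,
            LinearMap.id_coe, id_eq, mul_one]

lemma M3 (u v : H ⊗[k] H) :
    (TensorProduct.map LinearMap.id W.comul) (u * v)
      = (TensorProduct.map LinearMap.id W.comul) u
        * (TensorProduct.map LinearMap.id W.comul) v := by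
  induction u using TensorProduct.induction_on with
  | zero => simp only [zero_mul, LinearMap.map_zero]
  | add u₁ u₂ h₁ h₂ => simp only [add_mul, LinearMap.map_add, h₁, h₂]
  | tmul a b =>
    induction v using TensorProduct.induction_on with
    | zero => simp only [mul_zero, LinearMap.map_zero]
    | add v₁ v₂ h₁ h₂ => simp only [mul_add, LinearMap.map_add, h₁, h₂]
    | tmul c d =>
        simp only [Algebra.TensorProduct.tmul_mul_tmul, TensorProduct.map_tmul,
          LinearMap.id_coe, id_eq, W.comul_mul]

lemma Tmk (w : H ⊗[k] H) :
    (TensorProduct.assoc k H H H).symm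
        ((TensorProduct.map LinearMap.id ((TensorProduct.mk k H H).flip (1:H))) w)
      = w ⊗ₜ[k] (1:H) := by
  induction w using TensorProduct.induction_on with
  | zero => simp only [LinearMap.map_zero, LinearEquiv.map_zero, zero_tmul]
  | add w₁ w₂ h₁ h₂ =>
      simp only [LinearMap.map_add, LinearEquiv.map_add, add_tmul, h₁, h₂]
  | tmul a z =>
      simp [TensorProduct.assoc_symm_tmul]

end WeakHopfTrace2

namespace WeakHopfTrace2

open TensorProduct LinearMap WeakHopfTrace

variable {k H : Type*} [Field k] [Ring H] [Algebra k H] (W : WeakHopf k H)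

/-- Key identity: (1 ⊗ x) Δ(ℓ) = (S(x) ⊗ 1) Δ(ℓ) for a left integral ℓ. -/
lemma KT (ℓ : H) (hl : ℓ ∈ W.leftIntegrals) (x : H) :
    ((1:H) ⊗ₜ[k] x) * W.comul ℓ = (W.antipode x ⊗ₜ[k] (1:H)) * W.comul ℓ := by
  have hl' : ∀ h : H, h * ℓ = W.εtL h * ℓ := hl
  -- abbreviations
  have hεs : (TensorProduct.map W.εsL LinearMap.id :
        H ⊗[k] H →ₗ[k] H ⊗[k] H)
      = TensorProduct.map (LinearMap.mul' k H) LinearMap.id ∘ₗ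
        TensorProduct.map (TensorProduct.map W.antipode LinearMap.id) LinearMap.id ∘ₗ
        TensorProduct.map W.comul LinearMap.id := by
    rw [← map_comp_id, ← map_comp_id]
    congr 1
    ext z
    exact epsS_eq W z
  -- the inner (H⊗H)⊗H element, rewritten using the left-integral property
  have step_inner :
      (TensorProduct.map W.comul LinearMap.id) (W.comul x)
          * (TensorProduct.assoc k H H H).symm ((1:H) ⊗ₜ[k] W.comul ℓ)
        = ((TensorProduct.map LinearMap.id W.εtL) (W.comul x) ⊗ₜ[k] (1:H))
          * (TensorProduct.assoc k H H H).symm ((1:H) ⊗ₜ[k] W.comul ℓ) := by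
    have c1 : (TensorProduct.map W.comul LinearMap.id) (W.comul x)
        = (TensorProduct.assoc k H H H).symm
            ((TensorProduct.map LinearMap.id W.comul) (W.comul x)) := by
      have := congrArg (TensorProduct.assoc k H H H).symm (W.coassoc x)
      rwa [LinearEquiv.symm_apply_apply] at this
    -- Δx * (1 ⊗ ℓ) = (x₁ ⊗ ε_t(x₂)) * (1 ⊗ ℓ)
    have c2 : W.comul x * ((1:H) ⊗ₜ[k] ℓ)
        = (TensorProduct.map LinearMap.id W.εtL) (W.comul x) * ((1:H) ⊗ₜ[k] ℓ) := by
      rw [mul_one_tmul, mul_one_tmul]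
      have hmr : (LinearMap.mulRight k ℓ : H →ₗ[k] H)
          = LinearMap.mulRight k ℓ ∘ₗ W.εtL := by
        ext h; exact hl' h
      rw [show (TensorProduct.map LinearMap.id (LinearMap.mulRight k ℓ) :
            H ⊗[k] H →ₗ[k] H ⊗[k] H) (W.comul x)
          = (TensorProduct.map LinearMap.id (LinearMap.mulRight k ℓ ∘ₗ W.εtL))
              (W.comul x) from by rw [← hmr],
        map_id_comp, LinearMap.comp_apply]
    -- Δ(ε_t) identity in map form
    have hDt : (TensorProduct.map LinearMap.id W.comul)
          ((TensorProduct.map LinearMap.id W.εtL) (W.comul x))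
        = (TensorProduct.map LinearMap.id
            ((TensorProduct.mk k H H).flip (1:H)))
            ((TensorProduct.map LinearMap.id W.εtL) (W.comul x))
          * ((1:H) ⊗ₜ[k] W.comul 1) := by
      have hDtlm : W.comul ∘ₗ W.εtL
          = LinearMap.mulRight k (W.comul 1) ∘ₗ
              ((TensorProduct.mk k H H).flip (1:H)) ∘ₗ W.εtL := by
        ext z
        simp only [LinearMap.comp_apply, LinearMap.mulRight_apply, LinearMap.flip_apply,
          TensorProduct.mk_apply]
        exact comul_epsT W z
      rw [← LinearMap.comp_apply (TensorProduct.map LinearMap.id W.comul),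
        ← map_id_comp, hDtlm, map_id_comp, map_id_comp, LinearMap.comp_apply,
        LinearMap.comp_apply, mul_one_tmul]
    calc (TensorProduct.map W.comul LinearMap.id) (W.comul x)
          * (TensorProduct.assoc k H H H).symm ((1:H) ⊗ₜ[k] W.comul ℓ)
        = (TensorProduct.assoc k H H H).symm
            ((TensorProduct.map LinearMap.id W.comul) (W.comul x)
              * ((1:H) ⊗ₜ[k] W.comul ℓ)) := by
          rw [assoc_symm_mul, ← c1]
      _ = (TensorProduct.assoc k H H H).symm
            ((TensorProduct.map LinearMap.id W.comul) (W.comul x * ((1:H) ⊗ₜ[k] ℓ))) := by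
          rw [M3]
          simp
      _ = (TensorProduct.assoc k H H H).symm
            ((TensorProduct.map LinearMap.id W.comul)
              ((TensorProduct.map LinearMap.id W.εtL) (W.comul x) * ((1:H) ⊗ₜ[k] ℓ))) := by
          rw [c2]
      _ = (TensorProduct.assoc k H H H).symm
            ((TensorProduct.map LinearMap.id
              ((TensorProduct.mk k H H).flip (1:H)))
              ((TensorProduct.map LinearMap.id W.εtL) (W.comul x))
              * (((1:H) ⊗ₜ[k] W.comul 1) * ((1:H) ⊗ₜ[k] W.comul ℓ))) := by
          rw [M3, hDt, mul_assoc]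
          simp
      _ = (TensorProduct.assoc k H H H).symm
            ((TensorProduct.map LinearMap.id
              ((TensorProduct.mk k H H).flip (1:H)))
              ((TensorProduct.map LinearMap.id W.εtL) (W.comul x))
              * ((1:H) ⊗ₜ[k] W.comul ℓ)) := by
          rw [Algebra.TensorProduct.tmul_mul_tmul, one_mul, e_mul]
      _ = ((TensorProduct.map LinearMap.id W.εtL) (W.comul x) ⊗ₜ[k] (1:H))
          * (TensorProduct.assoc k H H H).symm ((1:H) ⊗ₜ[k] W.comul ℓ) := by
          rw [assoc_symm_mul, Tmk]
  -- the S(x₁)ε_t(x₂) collapse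
  have step_S :
      (LinearMap.mul' k H) ((TensorProduct.map W.antipode LinearMap.id)
        ((TensorProduct.map LinearMap.id W.εtL) (W.comul x))) = W.antipode x := by
    rw [← LinearMap.comp_apply (TensorProduct.map W.antipode LinearMap.id),
      ← map_split]
    exact AM W x
  calc ((1:H) ⊗ₜ[k] x) * W.comul ℓ
      = (((1:H) ⊗ₜ[k] x) * W.comul 1) * W.comul ℓ := by
        rw [mul_assoc, e_mul]
    _ = (TensorProduct.map W.εsL LinearMap.id) (W.comul x) * W.comul ℓ := by rw [I1]
    _ = (TensorProduct.map (LinearMap.mul' k H) LinearMap.id)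
          ((TensorProduct.map (TensorProduct.map W.antipode LinearMap.id) LinearMap.id)
            ((TensorProduct.map W.comul LinearMap.id) (W.comul x))) * W.comul ℓ := by
        rw [hεs, LinearMap.comp_apply, LinearMap.comp_apply]
    _ = (TensorProduct.map (LinearMap.mul' k H) LinearMap.id)
          ((TensorProduct.map (TensorProduct.map W.antipode LinearMap.id) LinearMap.id)
            ((TensorProduct.map W.comul LinearMap.id) (W.comul x))
            * (TensorProduct.assoc k H H H).symm ((1:H) ⊗ₜ[k] W.comul ℓ)) := by
        rw [M1]
    _ = (TensorProduct.map (LinearMap.mul' k H) LinearMap.id)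
          ((TensorProduct.map (TensorProduct.map W.antipode LinearMap.id) LinearMap.id)
            ((TensorProduct.map W.comul LinearMap.id) (W.comul x)
              * (TensorProduct.assoc k H H H).symm ((1:H) ⊗ₜ[k] W.comul ℓ))) := by
        rw [M2]
    _ = (TensorProduct.map (LinearMap.mul' k H) LinearMap.id)
          ((TensorProduct.map (TensorProduct.map W.antipode LinearMap.id) LinearMap.id)
            (((TensorProduct.map LinearMap.id W.εtL) (W.comul x) ⊗ₜ[k] (1:H))
              * (TensorProduct.assoc k H H H).symm ((1:H) ⊗ₜ[k] W.comul ℓ))) := by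
        rw [step_inner]
    _ = (TensorProduct.map (LinearMap.mul' k H) LinearMap.id)
          ((TensorProduct.map (TensorProduct.map W.antipode LinearMap.id) LinearMap.id)
            ((TensorProduct.map LinearMap.id W.εtL) (W.comul x) ⊗ₜ[k] (1:H)))
          * W.comul ℓ := by
        rw [M2, ← M1]
    _ = (W.antipode x ⊗ₜ[k] (1:H)) * W.comul ℓ := by
        rw [TensorProduct.map_tmul, TensorProduct.map_tmul, step_S]
        rfl

end WeakHopfTrace2

namespace WeakHopfTrace2

open TensorProduct LinearMap WeakHopfTrace

variable {k H : Type*} [Field k] [Ring H] [Algebra k H]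

lemma rid_lam_one_mul (lam : H →ₗ[k] k) (a : H) (d : H ⊗[k] H) :
    (TensorProduct.rid k H) ((TensorProduct.map LinearMap.id lam) ((a ⊗ₜ[k] (1:H)) * d))
      = a * (TensorProduct.rid k H) ((TensorProduct.map LinearMap.id lam) d) := by
  induction d using TensorProduct.induction_on with
  | zero => simp only [mul_zero, LinearMap.map_zero, LinearEquiv.map_zero]
  | add d₁ d₂ h₁ h₂ =>
      simp only [mul_add, LinearMap.map_add, LinearEquiv.map_add, h₁, h₂]
  | tmul p q =>
      simp only [Algebra.TensorProduct.tmul_mul_tmul, one_mul, TensorProduct.map_tmul,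
        LinearMap.id_coe, id_eq, TensorProduct.rid_tmul, mul_smul_comm, smul_eq_mul]

/-- b ↦ λ(· b) as a linear map into the dual. -/
noncomputable def rho (lam : H →ₗ[k] k) : H →ₗ[k] Module.Dual k H where
  toFun b := lam ∘ₗ LinearMap.mulRight k b
  map_add' b b' := by ext a; simp [mul_add]
  map_smul' c b := by ext a; simp [mul_smul_comm]

lemma rho_apply (lam : H →ₗ[k] k) (b a : H) : rho lam b a = lam (a * b) := rfl

lemma E_apply (lam : H →ₗ[k] k) (Sinv : H →ₗ[k] H) (d : H ⊗[k] H) (y : H) :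
    (dualTensorHom k H H ((TensorProduct.map (rho lam) LinearMap.id)
        ((TensorProduct.comm k H H) ((TensorProduct.map Sinv LinearMap.id) d)))) y
      = Sinv ((TensorProduct.rid k H)
          ((TensorProduct.map LinearMap.id lam) (((1:H) ⊗ₜ[k] y) * d))) := by
  induction d using TensorProduct.induction_on with
  | zero =>
      simp only [LinearMap.map_zero, LinearEquiv.map_zero, mul_zero, LinearMap.zero_apply]
  | add d₁ d₂ h₁ h₂ =>
      simp only [LinearMap.map_add, LinearEquiv.map_add, mul_add, LinearMap.add_apply,
        h₁, h₂]
  | tmul p q =>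
      simp only [TensorProduct.map_tmul, LinearMap.id_coe, id_eq, TensorProduct.comm_tmul,
        dualTensorHom_apply, rho_apply, Algebra.TensorProduct.tmul_mul_tmul, one_mul,
        TensorProduct.rid_tmul, LinearMap.map_smul]

lemma trace_step [FiniteDimensional k H] (T : H →ₗ[k] H) (lam : H →ₗ[k] k)
    (d : H ⊗[k] H) :
    LinearMap.trace k H (T ∘ₗ dualTensorHom k H H
        ((TensorProduct.map (rho lam) LinearMap.id) ((TensorProduct.comm k H H) d)))
      = lam ((LinearMap.mul' k H) ((TensorProduct.map T LinearMap.id) d)) := by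
  induction d using TensorProduct.induction_on with
  | zero =>
      simp only [LinearEquiv.map_zero, LinearMap.map_zero, LinearMap.comp_zero]
  | add d₁ d₂ h₁ h₂ =>
      simp only [LinearEquiv.map_add, LinearMap.map_add, LinearMap.comp_add, h₁, h₂]
  | tmul p q =>
      have hcomp : T ∘ₗ dualTensorHom k H H ((rho lam q) ⊗ₜ[k] p)
          = dualTensorHom k H H ((rho lam q) ⊗ₜ[k] (T p)) := by
        ext h
        simp [dualTensorHom_apply]
      rw [TensorProduct.comm_tmul, TensorProduct.map_tmul,
        show (LinearMap.id : H →ₗ[k] H) p = p from rfl, hcomp]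
      have h2 := LinearMap.ext_iff.mp (LinearMap.trace_eq_contract k H)
        ((rho lam q) ⊗ₜ[k] (T p))
      simp only [LinearMap.comp_apply] at h2
      rw [h2, contractLeft_apply, rho_apply, TensorProduct.map_tmul,
        LinearMap.mul'_apply]
      rfl

end WeakHopfTrace2

/-- The dual bases tensor identity: for every T : H → H,
Tr(T) = ⟨λ, T(S⁻¹(ℓ₁))ℓ₂⟩. -/
theorem weakHopf_dual_bases_trace {k H : Type*} [Field k] [Ring H] [Algebra k H]
    [FiniteDimensional k H] (W : WeakHopf k H) (ℓ : H) (lam : H →ₗ[k] k)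
    (Sinv : H →ₗ[k] H)
    (hS1 : Sinv ∘ₗ W.antipode = LinearMap.id) (hS2 : W.antipode ∘ₗ Sinv = LinearMap.id)
    (hl : ℓ ∈ W.leftIntegrals) (hlam : W.IsLeftIntegralDual lam)
    (hdual1 : (TensorProduct.rid k H)
      ((TensorProduct.map LinearMap.id lam) (W.comul ℓ)) = 1)
    (hdual2 : lam ∘ₗ LinearMap.mulRight k ℓ = W.counit) :
    ∀ T : H →ₗ[k] H,
      LinearMap.trace k H T =
        lam ((LinearMap.mul' k H)
          ((TensorProduct.map (T ∘ₗ Sinv) LinearMap.id) (W.comul ℓ))) := by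
  intro T
  have KL : ∀ y : H,
      (TensorProduct.rid k H) ((TensorProduct.map LinearMap.id lam)
        (((1:H) ⊗ₜ[k] y) * W.comul ℓ)) = W.antipode y := by
    intro y
    rw [WeakHopfTrace2.KT W ℓ hl y, WeakHopfTrace2.rid_lam_one_mul, hdual1, mul_one]
  have hEid : dualTensorHom k H H
      ((TensorProduct.map (WeakHopfTrace2.rho lam) LinearMap.id)
        ((TensorProduct.comm k H H)
          ((TensorProduct.map Sinv LinearMap.id) (W.comul ℓ)))) = LinearMap.id := by
    apply LinearMap.ext
    intro y
    rw [WeakHopfTrace2.E_apply, KL, ← LinearMap.comp_apply, hS1]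
  have h3 := WeakHopfTrace2.trace_step T lam
    ((TensorProduct.map Sinv LinearMap.id) (W.comul ℓ))
  rw [hEid, LinearMap.comp_id] at h3
  rw [h3, ← LinearMap.comp_apply (TensorProduct.map T LinearMap.id),
    ← TensorProduct.map_comp, LinearMap.id_comp]
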